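/- Let {X_i}_{i∈I} be a finite measurable partition of X, set K_i := K restricted to X_i×Y, and suppose π_i = (u_i⊗v_i)·K_i with u_i ∈ L^∞₊(X,μ), v_i ∈ L^∞₊(Y,ν) for each i ∈ I, and π := Σ_{i∈I} π_i. Then KL(π|K) = Σ_{i∈I} [ ∫ log u_i d(P_X π_i) + ∫ log v_i d(P_Y π_i) ] − π(X×Y) + K(X×Y), and all the integrals are finite. -/

import Mathlib

open MeasureTheory ENNReal Filter Topology

noncomputable section

/-- `phi s = s * log s - s + 1` (note `phi 0 = 1` since `Real.log 0 = 0`);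
this is the integrand of the Kullback--Leibler divergence. -/
def phi (s : ℝ) : ℝ := s * Real.log s - s + 1

open Classical in
/-- Kullback--Leibler divergence `KL(ρ|σ) ∈ [0,∞]`: `∫ phi (dρ/dσ) dσ` if `ρ ≪ σ`,
and `∞` otherwise (nonnegativity of `ρ` is automatic for measures). -/
def KL {Z : Type*} [MeasurableSpace Z] (ρ σ : Measure Z) : ℝ≥0∞ :=
  if ρ ≪ σ then ∫⁻ z, ENNReal.ofReal (phi ((ρ.rnDeriv σ) z).toReal) ∂σ else ⊤

/-- The set `Π(μh, νh)` of transport plans with marginals `μh` and `νh`. -/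
def Coupling {X Y : Type*} [MeasurableSpace X] [MeasurableSpace Y]
    (μh : Measure X) (νh : Measure Y) : Set (Measure (X × Y)) :=
  {π | π.map Prod.fst = μh ∧ π.map Prod.snd = νh}

/-- The Gibbs kernel measure `K = exp(-c/ε) ⋅ (μ ⊗ ν)`. -/
def Kmeas {X Y : Type*} [MeasurableSpace X] [MeasurableSpace Y]
    (μ : Measure X) (ν : Measure Y) [SFinite ν] (c : X × Y → ℝ) (ε : ℝ) : Measure (X × Y) :=
  (μ.prod ν).withDensity fun p => ENNReal.ofReal (Real.exp (-c p / ε))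

/-- The product density `(u ⊗ v)(x,y) = u x * v y`, as an `ℝ≥0∞`-valued density. -/
def prodDensity {X Y : Type*} (u : X → ℝ) (v : Y → ℝ) : X × Y → ℝ≥0∞ :=
  fun p => ENNReal.ofReal (u p.1 * v p.2)

/-- `L^∞₊(μ)`: measurable, a.e. nonnegative, essentially bounded functions. -/
def LinftyPlus {Z : Type*} [MeasurableSpace Z] (μ : Measure Z) (u : Z → ℝ) : Prop :=
  Measurable u ∧ (∀ᵐ z ∂μ, 0 ≤ u z) ∧ ∃ C : ℝ, ∀ᵐ z ∂μ, u z ≤ C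

lemma phi_nonneg {s : ℝ} (hs : 0 ≤ s) : 0 ≤ phi s := by
  rcases eq_or_lt_of_le hs with h | h
  · simp [phi, ← h]
  · have h1 : Real.log s⁻¹ ≤ s⁻¹ - 1 := Real.log_le_sub_one_of_pos (by positivity)
    rw [Real.log_inv] at h1
    have h2 : s * (1 - s⁻¹) ≤ s * Real.log s :=
      mul_le_mul_of_nonneg_left (by linarith) hs
    have h3 : s * s⁻¹ = 1 := mul_inv_cancel₀ h.ne'
    unfold phi; nlinarith

lemma phi_le {s M : ℝ} (hs0 : 0 ≤ s) (hsM : s ≤ M) : phi s ≤ M * |Real.log M| + 1 := by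
  have hM0 : 0 ≤ M * |Real.log M| := mul_nonneg (hs0.trans hsM) (abs_nonneg _)
  have h : s * Real.log s ≤ M * |Real.log M| := by
    rcases le_or_gt s 1 with h1 | h1
    · have : Real.log s ≤ 0 := Real.log_nonpos hs0 h1
      nlinarith
    · have hls : 0 ≤ Real.log s := Real.log_nonneg h1.le
      have : Real.log s ≤ Real.log M := Real.log_le_log (by linarith) hsM
      have : s * Real.log s ≤ M * Real.log M := by nlinarith
      calc s * Real.log s ≤ M * Real.log M := this
        _ ≤ M * |Real.log M| := by
            have := le_abs_self (Real.log M); nlinarith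
  unfold phi; linarith

lemma mul_abs_log_le {s M : ℝ} (hs0 : 0 ≤ s) (hsM : s ≤ M) :
    s * |Real.log s| ≤ 1 + M * |Real.log M| := by
  have hM0 : 0 ≤ M * |Real.log M| := mul_nonneg (hs0.trans hsM) (abs_nonneg _)
  rcases eq_or_lt_of_le hs0 with h | h
  · simp [← h]; linarith
  rcases le_or_gt s 1 with h1 | h1
  · have hls : Real.log s ≤ 0 := Real.log_nonpos hs0 h1
    rw [abs_of_nonpos hls]
    have h2 : Real.log s⁻¹ ≤ s⁻¹ - 1 := Real.log_le_sub_one_of_pos (by positivity)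
    rw [Real.log_inv] at h2
    have h3 : s * s⁻¹ = 1 := mul_inv_cancel₀ h.ne'
    nlinarith
  · have hls : 0 ≤ Real.log s := Real.log_nonneg h1.le
    rw [abs_of_nonneg hls]
    have h2 : Real.log s ≤ Real.log M := Real.log_le_log (by linarith) hsM
    have : s * Real.log s ≤ M * Real.log M := by nlinarith
    have := le_abs_self (Real.log M)
    nlinarith

lemma key {X Y : Type*} [MeasurableSpace X] [MeasurableSpace Y]
    (σ : Measure (X × Y)) [IsFiniteMeasure σ]
    (u : X → ℝ) (v : Y → ℝ) (hum : Measurable u) (hvm : Measurable v)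
    (Cu Cv : ℝ) (hCu : 0 ≤ Cu) (hCv : 0 ≤ Cv)
    (hu : ∀ᵐ p ∂σ, 0 ≤ u p.1 ∧ u p.1 ≤ Cu)
    (hv : ∀ᵐ p ∂σ, 0 ≤ v p.2 ∧ v p.2 ≤ Cv)
    (τ : Measure (X × Y)) (hτ : τ = σ.withDensity (prodDensity u v)) :
    Integrable (fun x => Real.log (u x)) (τ.map Prod.fst) ∧
    Integrable (fun y => Real.log (v y)) (τ.map Prod.snd) ∧
    τ Set.univ ≠ ⊤ ∧
    (∫⁻ p, ENNReal.ofReal (phi ((prodDensity u v) p).toReal) ∂σ) ≠ ⊤ ∧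
    (∫⁻ p, ENNReal.ofReal (phi ((prodDensity u v) p).toReal) ∂σ).toReal =
      (∫ x, Real.log (u x) ∂(τ.map Prod.fst)) + (∫ y, Real.log (v y) ∂(τ.map Prod.snd))
        - (τ Set.univ).toReal + (σ Set.univ).toReal := by
  set g : X × Y → ℝ := fun p => u p.1 * v p.2 with hg
  have hgm : Measurable g := (hum.comp measurable_fst).mul (hvm.comp measurable_snd)
  set fn : X × Y → NNReal := fun p => (g p).toNNReal with hfn
  have hfnm : Measurable fn := measurable_real_toNNReal.comp hgm
  have hτ' : τ = σ.withDensity (fun p => ((fn p : NNReal) : ℝ≥0∞)) := by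
    rw [hτ]; rfl
  have hkey : ∀ᵐ p ∂σ,
      ((prodDensity u v) p).toReal = g p ∧ 0 ≤ g p ∧ g p ≤ Cu * Cv ∧
      phi (g p) = g p * Real.log (u p.1) + g p * Real.log (v p.2) - g p + 1 := by
    filter_upwards [hu, hv] with p hup hvp
    obtain ⟨hu0, huC⟩ := hup; obtain ⟨hv0, hvC⟩ := hvp
    have hg0 : 0 ≤ g p := mul_nonneg hu0 hv0
    refine ⟨ENNReal.toReal_ofReal hg0, hg0, mul_le_mul huC hvC hv0 hCu, ?_⟩
    rcases eq_or_lt_of_le hu0 with h | h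
    · simp [phi, hg, ← h]
    rcases eq_or_lt_of_le hv0 with h' | h'
    · simp [phi, hg, ← h']
    · have : Real.log (g p) = Real.log (u p.1) + Real.log (v p.2) :=
        Real.log_mul h.ne' h'.ne'
      simp only [phi, this]; ring
  have hAint : Integrable (fun p => g p * Real.log (u p.1)) σ := by
    refine Integrable.mono' (integrable_const ((1 + Cu * |Real.log Cu|) * Cv))
      (hgm.mul (hum.log.comp measurable_fst)).aestronglyMeasurable ?_
    filter_upwards [hu, hv] with p hup hvp
    obtain ⟨hu0, huC⟩ := hup; obtain ⟨hv0, hvC⟩ := hvp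
    have h1 : u p.1 * |Real.log (u p.1)| ≤ 1 + Cu * |Real.log Cu| := mul_abs_log_le hu0 huC
    have h2 : |g p * Real.log (u p.1)| = (u p.1 * |Real.log (u p.1)|) * v p.2 := by
      rw [abs_mul, abs_of_nonneg (mul_nonneg hu0 hv0)]; ring
    rw [Real.norm_eq_abs, h2]
    have h3 : (0:ℝ) ≤ u p.1 * |Real.log (u p.1)| := mul_nonneg hu0 (abs_nonneg _)
    exact mul_le_mul h1 hvC hv0 (by linarith)
  have hBint : Integrable (fun p => g p * Real.log (v p.2)) σ := by
    refine Integrable.mono' (integrable_const ((1 + Cv * |Real.log Cv|) * Cu))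
      (hgm.mul (hvm.log.comp measurable_snd)).aestronglyMeasurable ?_
    filter_upwards [hu, hv] with p hup hvp
    obtain ⟨hu0, huC⟩ := hup; obtain ⟨hv0, hvC⟩ := hvp
    have h1 : v p.2 * |Real.log (v p.2)| ≤ 1 + Cv * |Real.log Cv| := mul_abs_log_le hv0 hvC
    have h2 : |g p * Real.log (v p.2)| = (v p.2 * |Real.log (v p.2)|) * u p.1 := by
      rw [abs_mul, abs_of_nonneg (mul_nonneg hu0 hv0)]; ring
    rw [Real.norm_eq_abs, h2]
    have h3 : (0:ℝ) ≤ v p.2 * |Real.log (v p.2)| := mul_nonneg hv0 (abs_nonneg _)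
    exact mul_le_mul h1 huC hu0 (by linarith)
  have hgint : Integrable g σ := by
    refine Integrable.mono' (integrable_const (Cu * Cv)) hgm.aestronglyMeasurable ?_
    filter_upwards [hkey] with p hp
    rw [Real.norm_eq_abs, abs_of_nonneg hp.2.1]; exact hp.2.2.1
  have hτg : (τ Set.univ) = ∫⁻ p, ENNReal.ofReal (g p) ∂σ := by
    rw [hτ, withDensity_apply _ MeasurableSet.univ, Measure.restrict_univ]; rfl
  have hτfin : τ Set.univ ≠ ⊤ := by
    rw [hτg]
    have hle : ∫⁻ p, ENNReal.ofReal (g p) ∂σ ≤ ∫⁻ _, ENNReal.ofReal (Cu * Cv) ∂σ := by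
      refine lintegral_mono_ae ?_
      filter_upwards [hkey] with p hp
      exact ENNReal.ofReal_le_ofReal hp.2.2.1
    rw [lintegral_const] at hle
    exact ne_top_of_le_ne_top (ENNReal.mul_ne_top ENNReal.ofReal_ne_top
      (measure_ne_top σ _)) hle
  have hτuniv : (τ Set.univ).toReal = ∫ p, g p ∂σ := by
    rw [hτg, integral_eq_lintegral_of_nonneg_ae ?_ hgm.aestronglyMeasurable]
    · filter_upwards [hkey] with p hp using hp.2.1
  have hlin : (∫⁻ p, ENNReal.ofReal (phi ((prodDensity u v) p).toReal) ∂σ) =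
      ∫⁻ p, ENNReal.ofReal (phi (g p)) ∂σ := by
    refine lintegral_congr_ae ?_
    filter_upwards [hkey] with p hp
    rw [hp.1]
  have hphim : Measurable fun p => phi (g p) :=
    ((hgm.mul hgm.log).sub hgm).add measurable_const
  have hfin : (∫⁻ p, ENNReal.ofReal (phi (g p)) ∂σ) ≠ ⊤ := by
    have hle : ∫⁻ p, ENNReal.ofReal (phi (g p)) ∂σ ≤
        ∫⁻ _, ENNReal.ofReal (Cu * Cv * |Real.log (Cu * Cv)| + 1) ∂σ := by
      refine lintegral_mono_ae ?_
      filter_upwards [hkey] with p hp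
      exact ENNReal.ofReal_le_ofReal (phi_le hp.2.1 hp.2.2.1)
    rw [lintegral_const] at hle
    exact ne_top_of_le_ne_top (ENNReal.mul_ne_top ENNReal.ofReal_ne_top
      (measure_ne_top σ _)) hle
  have htoReal : (∫⁻ p, ENNReal.ofReal (phi (g p)) ∂σ).toReal = ∫ p, phi (g p) ∂σ := by
    rw [integral_eq_lintegral_of_nonneg_ae ?_ hphim.aestronglyMeasurable]
    · filter_upwards [hkey] with p hp using phi_nonneg hp.2.1
  have hsplit : ∫ p, phi (g p) ∂σ =
      (∫ p, g p * Real.log (u p.1) ∂σ) + (∫ p, g p * Real.log (v p.2) ∂σ)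
        - ∫ p, g p ∂σ + (σ Set.univ).toReal := by
    have h1 : ∫ p, phi (g p) ∂σ = ∫ p,
        (g p * Real.log (u p.1) + g p * Real.log (v p.2) - g p + 1) ∂σ := by
      refine integral_congr_ae ?_
      filter_upwards [hkey] with p hp using hp.2.2.2
    have e1 : ∫ p, (g p * Real.log (u p.1) + g p * Real.log (v p.2) - g p + 1) ∂σ =
        (∫ p, (g p * Real.log (u p.1) + g p * Real.log (v p.2) - g p) ∂σ) +
          ∫ _, (1:ℝ) ∂σ :=
      integral_add ((hAint.add hBint).sub hgint) (integrable_const 1)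
    have e2 : ∫ p, (g p * Real.log (u p.1) + g p * Real.log (v p.2) - g p) ∂σ =
        (∫ p, (g p * Real.log (u p.1) + g p * Real.log (v p.2)) ∂σ) - ∫ p, g p ∂σ :=
      integral_sub (hAint.add hBint) hgint
    have e3 : ∫ p, (g p * Real.log (u p.1) + g p * Real.log (v p.2)) ∂σ =
        (∫ p, g p * Real.log (u p.1) ∂σ) + ∫ p, g p * Real.log (v p.2) ∂σ :=
      integral_add hAint hBint
    rw [h1, e1, e2, e3, integral_const]
    simp; rfl
  have hmapu : ∫ x, Real.log (u x) ∂(τ.map Prod.fst) = ∫ p, g p * Real.log (u p.1) ∂σ := by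
    rw [integral_map measurable_fst.aemeasurable hum.log.aestronglyMeasurable, hτ',
      integral_withDensity_eq_integral_smul hfnm]
    refine integral_congr_ae ?_
    filter_upwards [hkey] with p hp
    simp [hfn, NNReal.smul_def, Real.coe_toNNReal _ hp.2.1]
  have hmapv : ∫ y, Real.log (v y) ∂(τ.map Prod.snd) = ∫ p, g p * Real.log (v p.2) ∂σ := by
    rw [integral_map measurable_snd.aemeasurable hvm.log.aestronglyMeasurable, hτ',
      integral_withDensity_eq_integral_smul hfnm]
    refine integral_congr_ae ?_
    filter_upwards [hkey] with p hp
    simp [hfn, NNReal.smul_def, Real.coe_toNNReal _ hp.2.1]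
  have hintu : Integrable (fun x => Real.log (u x)) (τ.map Prod.fst) := by
    rw [integrable_map_measure hum.log.aestronglyMeasurable measurable_fst.aemeasurable,
      hτ']
    rw [integrable_withDensity_iff_integrable_smul hfnm]
    refine hAint.congr ?_
    filter_upwards [hkey] with p hp
    simp [hfn, NNReal.smul_def, Real.coe_toNNReal _ hp.2.1, Function.comp]
  have hintv : Integrable (fun y => Real.log (v y)) (τ.map Prod.snd) := by
    rw [integrable_map_measure hvm.log.aestronglyMeasurable measurable_snd.aemeasurable,
      hτ']
    rw [integrable_withDensity_iff_integrable_smul hfnm]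
    refine hBint.congr ?_
    filter_upwards [hkey] with p hp
    simp [hfn, NNReal.smul_def, Real.coe_toNNReal _ hp.2.1, Function.comp]
  refine ⟨hintu, hintv, hτfin, by rw [hlin]; exact hfin, ?_⟩
  rw [hlin, htoReal, hsplit, hmapu, hmapv, hτuniv]

lemma withDensity_finset_sum' {α : Type*} [MeasurableSpace α] (μ : Measure α)
    {ι : Type*} (s : Finset ι) (f : ι → α → ℝ≥0∞) (hf : ∀ i, Measurable (f i)) :
    μ.withDensity (fun a => ∑ i ∈ s, f i a) = ∑ i ∈ s, μ.withDensity (f i) := by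
  classical
  induction s using Finset.induction with
  | empty => simp
  | @insert j s hj ih =>
    have h : (fun a => ∑ i ∈ insert j s, f i a)
        = f j + fun a => ∑ i ∈ s, f i a := by
      ext a; simp [Finset.sum_insert hj]
    rw [h, withDensity_add_left (hf j), ih, Finset.sum_insert hj]

/-- Lemma 3.3: decomposition of `KL(π|K)` for a plan that is a
sum of scaled kernels over a finite partition of `X`:
`KL(π|K) = Σᵢ [∫ log uᵢ d(P_X πᵢ) + ∫ log vᵢ d(P_Y πᵢ)] − π(X×Y) + K(X×Y)`,
with all integrals finite. -/
theorem kl_scaling_decomposition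
    {X Y : Type*} [MetricSpace X] [CompactSpace X] [MeasurableSpace X] [BorelSpace X]
    [MetricSpace Y] [CompactSpace Y] [MeasurableSpace Y] [BorelSpace Y]
    (μ : Measure X) (ν : Measure Y) [IsProbabilityMeasure μ] [IsProbabilityMeasure ν]
    (c : X × Y → ℝ) (hc : Measurable c) (cmax : ℝ)
    (hc0 : ∀ p, 0 ≤ c p) (hcmax : ∀ p, c p ≤ cmax)
    (ε : ℝ) (hε : 0 < ε)
    {ι : Type*} [Fintype ι]
    (Xc : ι → Set X) (hXm : ∀ i, MeasurableSet (Xc i))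
    (hXd : ∀ i j, i ≠ j → Disjoint (Xc i) (Xc j)) (hXu : (⋃ i, Xc i) = Set.univ)
    (u : ι → X → ℝ) (v : ι → Y → ℝ)
    (hu : ∀ i, LinftyPlus μ (u i)) (hv : ∀ i, LinftyPlus ν (v i))
    (πi : ι → Measure (X × Y))
    (hπi : ∀ i, πi i =
      ((Kmeas μ ν c ε).restrict (Xc i ×ˢ Set.univ)).withDensity (prodDensity (u i) (v i)))
    (π : Measure (X × Y)) (hπ : π = ∑ i, πi i) :
    (∀ i, Integrable (fun x => Real.log (u i x)) ((πi i).map Prod.fst)) ∧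
    (∀ i, Integrable (fun y => Real.log (v i y)) ((πi i).map Prod.snd)) ∧
    KL π (Kmeas μ ν c ε) ≠ ⊤ ∧
    (KL π (Kmeas μ ν c ε)).toReal =
      (∑ i, ((∫ x, Real.log (u i x) ∂((πi i).map Prod.fst)) +
             (∫ y, Real.log (v i y) ∂((πi i).map Prod.snd))))
        - (π Set.univ).toReal + ((Kmeas μ ν c ε) Set.univ).toReal := by
  classical
  set K := Kmeas μ ν c ε with hK
  haveI : IsFiniteMeasure K := by
    constructor
    rw [hK, Kmeas, withDensity_apply _ MeasurableSet.univ, Measure.restrict_univ]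
    calc ∫⁻ p, ENNReal.ofReal (Real.exp (-c p / ε)) ∂(μ.prod ν)
        ≤ ∫⁻ _, 1 ∂(μ.prod ν) := by
          refine lintegral_mono fun p => ?_
          refine ENNReal.ofReal_le_one.mpr (Real.exp_le_one_iff.mpr ?_)
          exact div_nonpos_iff.mpr (Or.inr ⟨neg_nonpos.mpr (hc0 p), hε.le⟩)
      _ < ⊤ := by simp
  set S : ι → Set (X × Y) := fun i => Xc i ×ˢ (Set.univ : Set Y) with hS
  have hSm : ∀ i, MeasurableSet (S i) := fun i => (hXm i).prod MeasurableSet.univ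
  have hSd : Pairwise (Function.onFun Disjoint S) := by
    intro i j hij
    refine Set.disjoint_left.mpr ?_
    rintro ⟨x, y⟩ ⟨hx, -⟩ ⟨hx', -⟩
    exact Set.disjoint_left.mp (hXd i j hij) hx hx'
  have hScover : (⋃ i, S i) = Set.univ := by
    rw [hS]
    simp only [← Set.iUnion_prod_const, hXu, Set.univ_prod_univ]
  -- bounds
  have hCu := fun i => (hu i).2.2
  have hCv := fun i => (hv i).2.2
  choose Cu hCu using hCu
  choose Cv hCv using hCv
  -- a.e. transfers
  have hKac : K ≪ μ.prod ν := withDensity_absolutelyContinuous _ _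
  have hresac : ∀ i, K.restrict (S i) ≪ K :=
    fun i => Measure.absolutelyContinuous_of_le Measure.restrict_le_self
  have haeu : ∀ i, ∀ᵐ p ∂(K.restrict (S i)), 0 ≤ u i p.1 ∧ u i p.1 ≤ max (Cu i) 0 := by
    intro i
    have h1 : ∀ᵐ x ∂μ, 0 ≤ u i x ∧ u i x ≤ max (Cu i) 0 := by
      filter_upwards [(hu i).2.1, hCu i] with x h1 h2
      exact ⟨h1, le_max_of_le_left h2⟩
    have h2 : ∀ᵐ p ∂(μ.prod ν), 0 ≤ u i p.1 ∧ u i p.1 ≤ max (Cu i) 0 :=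
      Measure.quasiMeasurePreserving_fst.ae h1
    exact ((h2.filter_mono hKac.ae_le).filter_mono (hresac i).ae_le)
  have haev : ∀ i, ∀ᵐ p ∂(K.restrict (S i)), 0 ≤ v i p.2 ∧ v i p.2 ≤ max (Cv i) 0 := by
    intro i
    have h1 : ∀ᵐ y ∂ν, 0 ≤ v i y ∧ v i y ≤ max (Cv i) 0 := by
      filter_upwards [(hv i).2.1, hCv i] with y h1 h2
      exact ⟨h1, le_max_of_le_left h2⟩
    have h2 : ∀ᵐ p ∂(μ.prod ν), 0 ≤ v i p.2 ∧ v i p.2 ≤ max (Cv i) 0 :=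
      Measure.quasiMeasurePreserving_snd.ae h1
    exact ((h2.filter_mono hKac.ae_le).filter_mono (hresac i).ae_le)
  -- apply key
  have hkeyi := fun i => key (K.restrict (S i)) (u i) (v i) (hu i).1 (hv i).1
    (max (Cu i) 0) (max (Cv i) 0) (le_max_right _ _) (le_max_right _ _)
    (haeu i) (haev i) (πi i) (hπi i)
  -- π as withDensity
  have hpdm : ∀ i, Measurable (prodDensity (u i) (v i)) := fun i =>
    (((hu i).1.comp measurable_fst).mul ((hv i).1.comp measurable_snd)).ennreal_ofReal
  set F : X × Y → ℝ≥0∞ :=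
    fun p => ∑ i, (S i).indicator (prodDensity (u i) (v i)) p with hF
  have hFm : Measurable F :=
    Finset.measurable_sum _ fun i _ => (hpdm i).indicator (hSm i)
  have hπF : π = K.withDensity F := by
    rw [hπ, hF, withDensity_finset_sum' K Finset.univ _
      (fun i => (hpdm i).indicator (hSm i))]
    refine Finset.sum_congr rfl fun i _ => ?_
    rw [withDensity_indicator (hSm i), hπi i]
  have hac : π ≪ K := hπF ▸ withDensity_absolutelyContinuous K F
  have hrn : π.rnDeriv K =ᵐ[K] F := hπF ▸ Measure.rnDeriv_withDensity K hFm
  have hKL : KL π K = ∫⁻ p, ENNReal.ofReal (phi ((F p)).toReal) ∂K := by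
    rw [KL, if_pos hac]
    refine lintegral_congr_ae ?_
    filter_upwards [hrn] with p hp
    rw [hp]
  have hKsum : ∫⁻ p, ENNReal.ofReal (phi ((F p)).toReal) ∂K =
      ∑ i, ∫⁻ p, ENNReal.ofReal (phi ((F p)).toReal) ∂(K.restrict (S i)) := by
    conv_lhs => rw [← Measure.restrict_univ (μ := K), ← hScover,
      Measure.restrict_iUnion hSd hSm]
    rw [lintegral_sum_measure, tsum_fintype]
  have hFi : ∀ i, ∫⁻ p, ENNReal.ofReal (phi ((F p)).toReal) ∂(K.restrict (S i)) =
      ∫⁻ p, ENNReal.ofReal (phi ((prodDensity (u i) (v i)) p).toReal)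
        ∂(K.restrict (S i)) := by
    intro i
    refine setLIntegral_congr_fun (hSm i) (fun p hp => ?_)
    have hFp : F p = prodDensity (u i) (v i) p := by
      simp only [hF]
      rw [Finset.sum_eq_single i
        (fun j _ hj => Set.indicator_of_notMem
          (fun hpj => Set.disjoint_left.mp (hSd hj) hpj hp) _)
        (fun h => absurd (Finset.mem_univ i) h)]
      exact Set.indicator_of_mem hp _
    rw [hFp]
  have hKLsum : KL π K = ∑ i, ∫⁻ p,
      ENNReal.ofReal (phi ((prodDensity (u i) (v i)) p).toReal) ∂(K.restrict (S i)) := by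
    rw [hKL, hKsum]
    exact Finset.sum_congr rfl fun i _ => hFi i
  have hLfin : ∀ i, (∫⁻ p,
      ENNReal.ofReal (phi ((prodDensity (u i) (v i)) p).toReal) ∂(K.restrict (S i))) ≠ ⊤ :=
    fun i => (hkeyi i).2.2.2.1
  have hKLne : KL π K ≠ ⊤ := by
    rw [hKLsum]
    exact (ENNReal.sum_lt_top.mpr fun i _ => (hLfin i).lt_top).ne
  refine ⟨fun i => (hkeyi i).1, fun i => (hkeyi i).2.1, hKLne, ?_⟩
  have hπuniv : (π Set.univ).toReal = ∑ i, ((πi i) Set.univ).toReal := by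
    rw [hπ, Measure.finset_sum_apply,
      ENNReal.toReal_sum (fun i _ => (hkeyi i).2.2.1)]
  have hKuniv : (K Set.univ).toReal = ∑ i, ((K.restrict (S i)) Set.univ).toReal := by
    simp only [Measure.restrict_apply_univ]
    rw [← ENNReal.toReal_sum (fun i _ => measure_ne_top K _)]
    congr 1
    rw [← tsum_fintype (L := SummationFilter.unconditional ι), ← measure_iUnion hSd hSm, hScover]
  rw [hKLsum, ENNReal.toReal_sum (fun i _ => hLfin i)]
  have := fun i => (hkeyi i).2.2.2.2
  calc ∑ i, (∫⁻ p, ENNReal.ofReal (phi ((prodDensity (u i) (v i)) p).toReal)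
        ∂(K.restrict (S i))).toReal
      = ∑ i, (((∫ x, Real.log (u i x) ∂((πi i).map Prod.fst)) +
          (∫ y, Real.log (v i y) ∂((πi i).map Prod.snd)))
          - ((πi i) Set.univ).toReal + ((K.restrict (S i)) Set.univ).toReal) := by
        refine Finset.sum_congr rfl fun i _ => ?_
        rw [this i]
    _ = (∑ i, ((∫ x, Real.log (u i x) ∂((πi i).map Prod.fst)) +
          (∫ y, Real.log (v i y) ∂((πi i).map Prod.snd))))
        - (π Set.univ).toReal + (K Set.univ).toReal := by
        rw [hπuniv, hKuniv, Finset.sum_add_distrib, Finset.sum_sub_distrib]
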